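/- Let k, ℓ be positive integers with ℓ ≥ 2 and let 𝒞 be a non-empty (kℓ)-rich collection of 2ℓ-cycles in a graph G. Then G contains the cylinder quadrangulation P_{k,ℓ} as a subgraph. -/
import Mathlib


open SimpleGraph

/-- `F` has an (injective) copy in `G`. -/
def Contains {W V : Type*} (F : SimpleGraph W) (G : SimpleGraph V) : Prop :=
  ∃ f : W → V, Function.Injective f ∧ ∀ a b, F.Adj a b → G.Adj (f a) (f b)

/-- The quadrangulation `P_{k,ℓ}` of the cylinder (rows `0,…,k-1`, columns modulo `ℓ`):
row `i` is joined to row `i+1` vertically, and diagonally according to the parity of `i`. -/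
def cylinderGraph (k l : ℕ) : SimpleGraph (Fin k × ZMod l) :=
  SimpleGraph.fromRel (fun a b => a.1.val + 1 = b.1.val ∧
    (a.2 = b.2 ∨ (Even a.1.val ∧ a.2 = b.2 + 1) ∨ (Odd a.1.val ∧ b.2 = a.2 + 1)))

/-- `c : ZMod m → V` is a (labelled) cycle on `m` vertices in `G`. -/
def IsCycleIn {V : Type*} (G : SimpleGraph V) {m : ℕ} (c : ZMod m → V) : Prop :=
  Function.Injective c ∧ ∀ i : ZMod m, G.Adj (c i) (c (i + 1))

/-- position map: column `j`, parity `p` into `ZMod (2*l)`. -/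
def Epos (l : ℕ) (j : ZMod l) (p : ℕ) : ZMod (2*l) := ((2 * j.val + p : ℕ) : ZMod (2*l))

lemma Epos_val {l : ℕ} (hl : 0 < l) (j : ZMod l) {p : ℕ} (hp : p < 2) :
    (Epos l j p).val = 2 * j.val + p := by
  haveI : NeZero l := ⟨hl.ne'⟩
  haveI : NeZero (2*l) := ⟨by omega⟩
  have hj : j.val < l := ZMod.val_lt j
  exact ZMod.val_natCast_of_lt (by omega)

lemma Epos_inj {l : ℕ} (hl : 0 < l) {j j' : ZMod l} {p : ℕ} (hp : p < 2)
    (h : Epos l j p = Epos l j' p) : j = j' := by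
  haveI : NeZero l := ⟨hl.ne'⟩
  have h1 := Epos_val hl j hp
  have h2 := Epos_val hl j' hp
  have : j.val = j'.val := by rw [h] at h1; omega
  exact ZMod.val_injective l this

lemma Epos_parity {l : ℕ} (hl : 0 < l) (j : ZMod l) {p : ℕ} (hp : p < 2) :
    (Epos l j p).val % 2 = p := by
  rw [Epos_val hl j hp]; omega

lemma cast_two_mul_mod {l : ℕ} (a : ℕ) :
    ((2 * (a % l) : ℕ) : ZMod (2*l)) = ((2 * a : ℕ) : ZMod (2*l)) := by
  have h0 : ((2*l : ℕ) : ZMod (2*l)) = 0 := ZMod.natCast_self _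
  conv_rhs => rw [← Nat.div_add_mod a l]
  push_cast at h0 ⊢
  linear_combination (-(a / l : ZMod (2*l))) * h0

lemma Epos_succ0 {l : ℕ} (j : ZMod l) : Epos l j 0 + 1 = Epos l j 1 := by
  unfold Epos; push_cast; ring

lemma Epos_succ1 {l : ℕ} (hl : 2 ≤ l) (j : ZMod l) : Epos l j 1 + 1 = Epos l (j+1) 0 := by
  haveI : NeZero l := ⟨by omega⟩
  haveI : Fact (1 < l) := ⟨by omega⟩
  have h1 : (j+1).val = (j.val + 1) % l := by rw [ZMod.val_add, ZMod.val_one]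
  unfold Epos
  rw [h1, add_zero, cast_two_mul_mod]
  push_cast; ring

lemma Epos_surj {l : ℕ} (hl : 0 < l) (t : ZMod (2*l)) :
    ∃ j : ZMod l, Epos l j (t.val % 2) = t := by
  haveI : NeZero l := ⟨hl.ne'⟩
  haveI : NeZero (2*l) := ⟨by omega⟩
  refine ⟨((t.val / 2 : ℕ) : ZMod l), ?_⟩
  have ht : t.val < 2*l := ZMod.val_lt t
  have hv : ((t.val/2 : ℕ) : ZMod l).val = t.val / 2 := ZMod.val_natCast_of_lt (by omega)
  unfold Epos
  rw [hv, Nat.div_add_mod]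
  simp [ZMod.natCast_val, ZMod.cast_id]

lemma step_lemma {V : Type*} [Fintype V] {α m : ℕ} (Cs : Set (ZMod m → V))
    (hrich : ∀ c ∈ Cs, ∀ i : ZMod m, α ≤ {v | Function.update c i v ∈ Cs}.ncard)
    {c : ZMod m → V} (hc : c ∈ Cs) (t : ZMod m) {S : Set V} (hS : S.ncard < α) :
    ∃ v, v ∉ S ∧ Function.update c t v ∈ Cs := by
  by_contra h
  push_neg at h
  have hsub : {v | Function.update c t v ∈ Cs} ⊆ S := by
    intro v hv
    by_contra hvS
    exact h v hvS hv
  have := Set.ncard_le_ncard hsub (Set.toFinite S)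
  have := hrich c hc t
  omega

lemma multi_lemma {V : Type*} [Fintype V] {α m : ℕ} (Cs : Set (ZMod m → V))
    (hrich : ∀ c ∈ Cs, ∀ i : ZMod m, α ≤ {v | Function.update c i v ∈ Cs}.ncard)
    {c : ZMod m → V} (hc : c ∈ Cs) {R : Set V} (hR : R.ncard < α)
    (T : Finset (ZMod m)) :
    ∃ c', c' ∈ Cs ∧ (∀ t ∉ T, c' t = c t) ∧ ∀ t ∈ T, c' t ∉ R := by
  classical
  induction T using Finset.induction with
  | empty => exact ⟨c, hc, fun _ _ => rfl, fun t ht => absurd ht (Finset.notMem_empty t)⟩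
  | @insert a T ha ih =>
    obtain ⟨c'', hc'', heq, hmem⟩ := ih
    obtain ⟨v, hvR, hv⟩ := step_lemma Cs hrich hc'' a hR
    refine ⟨Function.update c'' a v, hv, ?_, ?_⟩
    · intro t ht
      rw [Finset.mem_insert] at ht
      push_neg at ht
      rw [Function.update_of_ne ht.1, heq t ht.2]
    · intro t ht
      rw [Finset.mem_insert] at ht
      rcases ht with rfl | ht
      · rwa [Function.update_self]
      · rcases eq_or_ne t a with rfl | hta
        · rwa [Function.update_self]
        · rw [Function.update_of_ne hta]; exact hmem t ht

/-- If `G` has a non-empty `(kℓ)`-rich collection of `2ℓ`-cycles, then `G` contains the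
cylinder quadrangulation `P_{k,ℓ}` as a subgraph. -/
theorem cylinder_of_rich_cycles {V : Type*} [Fintype V] [DecidableEq V] (k l α : ℕ)
    (hk : 0 < k) (hl : 2 ≤ l) (hα : k * l ≤ α) (G : SimpleGraph V)
    (Cs : Set (ZMod (2 * l) → V)) (hne : Cs.Nonempty)
    (hcyc : ∀ c ∈ Cs, IsCycleIn G c)
    (hrich : ∀ c ∈ Cs, ∀ i : ZMod (2 * l),
      α ≤ {v | Function.update c i v ∈ Cs}.ncard) :
    Contains (cylinderGraph k l) G := by
  haveI : NeZero l := ⟨by omega⟩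
  haveI : NeZero (2*l) := ⟨by omega⟩
  have hl0 : 0 < l := by omega
  have key : ∀ n, 1 ≤ n → n ≤ k → ∃ (f : ℕ → ZMod l → V) (c : ZMod (2*l) → V),
      c ∈ Cs ∧
      (∀ i j i' j', i < n → i' < n → f i j = f i' j' → i = i' ∧ j = j') ∧
      (∀ i, i + 1 < n → ∀ j : ZMod l,
        G.Adj (f i j) (f (i+1) j) ∧
        (Even i → G.Adj (f i j) (f (i+1) (j - 1))) ∧
        (Odd i → G.Adj (f i j) (f (i+1) (j + 1)))) ∧
      (∀ j, f (n-1) j = c (Epos l j ((n-1) % 2))) := by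
    intro n hn
    induction n, hn using Nat.le_induction with
    | base =>
      intro _
      obtain ⟨c, hc⟩ := hne
      refine ⟨fun _ j => c (Epos l j 0), c, hc, ?_, by omega, fun j => rfl⟩
      intro i j i' j' hi hi' heq
      have hj := Epos_inj hl0 (p := 0) (by omega) ((hcyc c hc).1 heq)
      exact ⟨by omega, hj⟩
    | succ m hm ih =>
      intro hmk
      obtain ⟨f, c, hc, hinj, hadj, hanchor⟩ := ih (by omega)
      -- forbidden set: all vertices used so far
      set R : Set V := (fun q : Fin m × ZMod l => f q.1 q.2) '' Set.univ with hRdef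
      have hRmem : ∀ i j, i < m → f i j ∈ R := by
        intro i j hi
        exact ⟨(⟨i, hi⟩, j), Set.mem_univ _, rfl⟩
      have hR : R.ncard < α := by
        have h1 : R.ncard ≤ (Set.univ : Set (Fin m × ZMod l)).ncard :=
          Set.ncard_image_le (Set.toFinite _)
        have h2 : (Set.univ : Set (Fin m × ZMod l)).ncard = m * l := by
          rw [Set.ncard_univ, Nat.card_eq_fintype_card, Fintype.card_prod,
            Fintype.card_fin, ZMod.card]
        have h3 : m * l < k * l := (Nat.mul_lt_mul_right hl0).mpr (by omega)
        omega
      set T : Finset (ZMod (2*l)) := Finset.image (fun j : ZMod l => Epos l j (m % 2))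
        Finset.univ with hTdef
      obtain ⟨c', hc', hleft, hT⟩ := multi_lemma Cs hrich hc hR T
      have hnotT : ∀ j : ZMod l, Epos l j ((m-1) % 2) ∉ T := by
        intro j hj
        rw [hTdef, Finset.mem_image] at hj
        obtain ⟨j', _, hj'⟩ := hj
        have p1 := Epos_parity hl0 j' (p := m % 2) (by omega)
        have p2 := Epos_parity hl0 j (p := (m-1) % 2) (by omega)
        rw [hj'] at p1
        omega
      have hc'eq : ∀ j, c' (Epos l j ((m-1) % 2)) = c (Epos l j ((m-1) % 2)) :=
        fun j => hleft _ (hnotT j)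
      have hnewR : ∀ j : ZMod l, c' (Epos l j (m % 2)) ∉ R := by
        intro j
        exact hT _ (Finset.mem_image.2 ⟨j, Finset.mem_univ _, rfl⟩)
      set f' : ℕ → ZMod l → V := fun i j => if i = m then c' (Epos l j (m % 2)) else f i j
        with hf'def
      have hold : ∀ i, i < m → ∀ j, f' i j = f i j := by
        intro i hi j
        simp only [hf'def, if_neg (by omega : i ≠ m)]
      have hrow : ∀ j, f' m j = c' (Epos l j (m % 2)) := by
        intro j; simp only [hf'def, if_pos rfl]
      have hprev : ∀ j, f' (m-1) j = c' (Epos l j ((m-1) % 2)) := by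
        intro j
        rw [hold (m-1) (by omega) j, hanchor j, hc'eq j]
      refine ⟨f', c', hc', ?_, ?_, ?_⟩
      · -- injectivity
        intro i j i' j' hi hi' heq
        by_cases him : i = m
        · by_cases him' : i' = m
          · rw [him, hrow] at heq
            rw [him', hrow] at heq
            exact ⟨him.trans him'.symm, Epos_inj hl0 (by omega) ((hcyc c' hc').1 heq)⟩
          · have hi'm : i' < m := by omega
            rw [him, hrow, hold i' hi'm] at heq
            exact absurd (heq ▸ hRmem i' j' hi'm) (hnewR j)
        · by_cases him' : i' = m
          · have him2 : i < m := by omega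
            rw [him', hrow, hold i him2] at heq
            exact absurd (heq ▸ hRmem i j him2) (hnewR j')
          · have h1 : i < m := by omega
            have h2 : i' < m := by omega
            rw [hold i h1, hold i' h2] at heq
            exact hinj i j i' j' h1 h2 heq
      · -- adjacency
        intro i hi j
        rcases Nat.lt_or_ge (i+1) m with hlt | hge
        · have hi1 : i < m := by omega
          obtain ⟨hv, he, ho⟩ := hadj i hlt j
          simp only [hold i hi1, hold (i+1) hlt]
          exact ⟨hv, he, ho⟩
        · have him : i = m - 1 := by omega
          have hmi : m = i + 1 := by omega
          have hcadj := (hcyc c' hc').2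
          have hfi : ∀ j' : ZMod l, f' i j' = c' (Epos l j' (i % 2)) := by
            intro j'; rw [him, hprev]
          have hfi1 : ∀ j' : ZMod l, f' (i+1) j' = c' (Epos l j' ((i+1) % 2)) := by
            intro j'; rw [← hmi, hrow]
          rcases Nat.even_or_odd i with hev | hod
          · have h0 : i % 2 = 0 := Nat.even_iff.1 hev
            have h1 : (i+1) % 2 = 1 := by omega
            refine ⟨?_, fun _ => ?_, fun hodd => absurd hodd (by simp [Nat.odd_iff, h0])⟩
            · rw [hfi, hfi1, h0, h1, ← Epos_succ0]
              exact hcadj _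
            · rw [hfi, hfi1, h0, h1]
              have := hcadj (Epos l (j-1) 1)
              rw [Epos_succ1 hl (j-1), sub_add_cancel] at this
              exact this.symm
          · have h0 : i % 2 = 1 := Nat.odd_iff.1 hod
            have h1 : (i+1) % 2 = 0 := by omega
            refine ⟨?_, fun hev' => absurd hev' (by simp [Nat.even_iff, h0]), fun _ => ?_⟩
            · rw [hfi, hfi1, h0, h1]
              have := hcadj (Epos l j 0)
              rw [Epos_succ0] at this
              exact this.symm
            · rw [hfi, hfi1, h0, h1, ← Epos_succ1 hl]
              exact hcadj _
      · -- anchor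
        intro j
        simp only [Nat.add_sub_cancel]
        exact hrow j
  obtain ⟨f, c, hc, hinj, hadj, _⟩ := key k (by omega) le_rfl
  refine ⟨fun q => f q.1.val q.2, ?_, ?_⟩
  · intro a b h
    obtain ⟨h1, h2⟩ := hinj a.1.val a.2 b.1.val b.2 a.1.isLt b.1.isLt h
    exact Prod.ext (Fin.ext h1) h2
  · have hrel : ∀ a b : Fin k × ZMod l, (a.1.val + 1 = b.1.val ∧
        (a.2 = b.2 ∨ (Even a.1.val ∧ a.2 = b.2 + 1) ∨ (Odd a.1.val ∧ b.2 = a.2 + 1))) →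
        G.Adj (f a.1.val a.2) (f b.1.val b.2) := by
      rintro a b ⟨hstep, hcol⟩
      have h1 : a.1.val + 1 < k := by rw [hstep]; exact b.1.isLt
      obtain ⟨hv, he, ho⟩ := hadj a.1.val h1 a.2
      rcases hcol with hcc | ⟨hev, hcc⟩ | ⟨hod, hcc⟩
      · rw [← hstep, ← hcc]; exact hv
      · have : b.2 = a.2 - 1 := by rw [hcc]; ring
        rw [← hstep, this]; exact he hev
      · rw [← hstep, hcc]; exact ho hod
    intro a b hab
    rw [cylinderGraph, fromRel_adj] at hab
    rcases hab.2 with h | h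
    · exact hrel a b h
    · exact (hrel b a h).symm
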